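/- Under the monad axioms for (E, d, s) over A, the map ⊙⁺ is a right action of the monoid E on List A: as ⊙⁺ e₀ = as and as ⊙⁺ (e · e') = (as ⊙⁺ e) ⊙⁺ e', for every list as and e, e' ∈ E. Moreover, the identity list is a fixed point: [] ⊙⁺ e = []. -/
import Mathlib


/-- Canonical extension of `d : A → E → E` to lists. -/
def dPlus {A E : Type*} (d : A → E → E) : List A → E → E
  | [], e => e
  | a :: as, e => d a (dPlus d as e)

/-- Canonical extension of `s` to a map `List A × E → List A`. -/
def odPlus {A E : Type*} (d : A → E → E) (s : A → E → A) : List A → E → List A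
  | [], _ => []
  | a :: as, e => s a (dPlus d as e) :: odPlus d s as e

theorem odPlus_is_right_action {A E : Type*} [Monoid E]
    (d : A → E → E) (s : A → E → A)
    (hs1 : ∀ a : A, s a 1 = a)
    (hd1 : ∀ a : A, d a 1 = 1)
    (hs2 : ∀ (a : A) (e e' : E), s a (e * e') = s (s a e) e')
    (hd2 : ∀ (a : A) (e e' : E), d a (e * e') = d a e * d (s a e) e') :
    (∀ as : List A, odPlus d s as 1 = as) ∧
    (∀ (as : List A) (e e' : E),
      odPlus d s as (e * e') = odPlus d s (odPlus d s as e) e') ∧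
    (∀ e : E, odPlus d s [] e = []) := by
  have done : ∀ as : List A, dPlus d as 1 = 1 := by
    intro as; induction as with
    | nil => rfl
    | cons a as ih => simp [dPlus, ih, hd1]
  have dmul : ∀ (as : List A) (e e' : E),
      dPlus d as (e * e') = dPlus d as e * dPlus d (odPlus d s as e) e' := by
    intro as; induction as with
    | nil => intro e e'; rfl
    | cons a as ih => intro e e'; simp [dPlus, odPlus, ih, hd2]
  refine ⟨?_, ?_, fun e => rfl⟩
  · intro as; induction as with
    | nil => rfl
    | cons a as ih => simp [odPlus, ih, done, hs1]
  · intro as; induction as with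
    | nil => intro e e'; rfl
    | cons a as ih => intro e e'; simp [odPlus, ih, dmul, hs2]
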